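/- Let S and A be nonempty finite types, let γ be a real number with 0 ≤ γ < 1, and let P : S → A → S → ℝ satisfy P s a s' ≥ 0 for all s, a, s' and ∑_{s'∈S} P s a s' = 1 for all s, a. Let r : S → A → ℝ and define the optimal Bellman operator T by (T f)(s) = max_{a∈A} ( r s a + γ · ∑_{s'∈S} P s a s' · f s' ). Then there exists a unique function V* : S → ℝ with T V* = V*. -/
import Mathlib

open Finset in
/-- The optimal Bellman operator of a finite MDP has a unique fixed point,
the optimal value function `V*`. -/
theorem bellman_fixed_point_exists_unique {S A : Type*} [Fintype S] [Fintype A]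
    [Nonempty S] [Nonempty A]
    (γ : ℝ) (hγ0 : 0 ≤ γ) (hγ1 : γ < 1)
    (P : S → A → S → ℝ) (hP0 : ∀ s a s', 0 ≤ P s a s')
    (hP1 : ∀ s a, ∑ s', P s a s' = 1)
    (r : S → A → ℝ)
    (T : (S → ℝ) → S → ℝ)
    (hT : ∀ f s, T f s =
      univ.sup' univ_nonempty fun a => r s a + γ * ∑ s', P s a s' * f s') :
    ∃! Vstar : S → ℝ, T Vstar = Vstar := by
  -- pointwise contraction estimate
  have key : ∀ f g : S → ℝ, ∀ s, T f s - T g s ≤ γ * dist f g := by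
    intro f g s
    rw [hT, hT, sub_le_iff_le_add]
    refine Finset.sup'_le _ _ fun a _ => ?_
    have hbound : r s a + γ * ∑ s', P s a s' * f s' ≤
        (r s a + γ * ∑ s', P s a s' * g s') + γ * dist f g := by
      have h1 : (∑ s', P s a s' * f s') - (∑ s', P s a s' * g s') ≤ dist f g := by
        rw [← Finset.sum_sub_distrib]
        calc ∑ s', (P s a s' * f s' - P s a s' * g s')
            = ∑ s', P s a s' * (f s' - g s') := by
              simp [mul_sub]
          _ ≤ ∑ s', P s a s' * dist f g := by
              refine Finset.sum_le_sum fun s' _ => ?_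
              refine mul_le_mul_of_nonneg_left ?_ (hP0 s a s')
              calc f s' - g s' ≤ |f s' - g s'| := le_abs_self _
                _ = dist (f s') (g s') := (Real.dist_eq _ _).symm
                _ ≤ dist f g := dist_le_pi_dist f g s'
          _ = dist f g := by rw [← Finset.sum_mul, hP1, one_mul]
      nlinarith [dist_nonneg (x := f) (y := g)]
    calc r s a + γ * ∑ s', P s a s' * f s'
        ≤ (r s a + γ * ∑ s', P s a s' * g s') + γ * dist f g := hbound
      _ ≤ (univ.sup' univ_nonempty fun a => r s a + γ * ∑ s', P s a s' * g s')
            + γ * dist f g := by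
          gcongr
          exact Finset.le_sup' (fun a => r s a + γ * ∑ s', P s a s' * g s')
            (Finset.mem_univ a)
      _ = γ * dist f g
            + univ.sup' univ_nonempty fun a => r s a + γ * ∑ s', P s a s' * g s' :=
          add_comm _ _
  have hdist : ∀ f g : S → ℝ, dist (T f) (T g) ≤ γ * dist f g := by
    intro f g
    refine dist_pi_le_iff (by positivity) |>.2 fun s => ?_
    rw [Real.dist_eq, abs_le]
    constructor
    · have h := key g f s
      rw [dist_comm g f] at h
      linarith
    · exact key f g s
  have hL : LipschitzWith ⟨γ, hγ0⟩ T :=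
    LipschitzWith.of_dist_le_mul fun f g => hdist f g
  have hC : ContractingWith ⟨γ, hγ0⟩ T := ⟨by exact_mod_cast hγ1, hL⟩
  refine ⟨ContractingWith.fixedPoint T hC, hC.fixedPoint_isFixedPt, fun V hV => ?_⟩
  exact hC.fixedPoint_unique hV
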